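/- For λ > 1, (λ/(1+λ)^{3/2}) ∫₀¹ z/(√(1-z)·√(1-z+λ(1+z))) dz = (λ/(λ²-1)^{3/2})·( √(λ²-1) - arcsec(λ) ). -/

import Mathlib

open Real MeasureTheory intervalIntegral

noncomputable def Fant (lam z : ℝ) : ℝ :=
  2 / (lam - 1) ^ ((3:ℝ)/2) * arcsin (Real.sqrt ((lam - 1) * (1 - z) / (2 * lam)))
    - Real.sqrt (1 - z) * Real.sqrt (1 + lam + (lam - 1) * z) / (lam - 1)

lemma Fant_hasDerivAt (lam x : ℝ) (hlam : 1 < lam) (hx0 : 0 < x) (hx1 : x < 1) :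
    HasDerivAt (Fant lam)
      (x / (Real.sqrt (1 - x) * Real.sqrt (1 - x + lam * (1 + x)))) x := by
  have ha : (0:ℝ) < lam - 1 := by linarith
  have hl : (0:ℝ) < 2 * lam := by linarith
  have h1x : (0:ℝ) < 1 - x := by linarith
  have hg : (0:ℝ) < 1 + lam + (lam - 1) * x := by nlinarith
  have hinner_pos : 0 < (lam - 1) * (1 - x) / (2 * lam) := by positivity
  have hsub : HasDerivAt (fun z : ℝ => 1 - z) (-1) x := by
    exact (hasDerivAt_id' x).const_sub 1
  have hIn : HasDerivAt (fun z : ℝ => (lam - 1) * (1 - z) / (2 * lam))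
      ((lam - 1) * (-1) / (2 * lam)) x := by
    simpa [mul_comm, mul_assoc] using (hsub.const_mul (lam - 1)).div_const (2 * lam)
  have hS : HasDerivAt (fun z : ℝ => Real.sqrt ((lam - 1) * (1 - z) / (2 * lam)))
      (1 / (2 * Real.sqrt ((lam - 1) * (1 - x) / (2 * lam))) * ((lam - 1) * (-1) / (2 * lam))) x :=
    (Real.hasDerivAt_sqrt hinner_pos.ne').comp x hIn
  have hinner_lt : (lam - 1) * (1 - x) / (2 * lam) < 1 := by
    rw [div_lt_one hl]; nlinarith
  have hs_lt : Real.sqrt ((lam - 1) * (1 - x) / (2 * lam)) < 1 := by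
    have h := Real.sqrt_lt_sqrt hinner_pos.le hinner_lt
    simpa using h
  have hs_ne1 : Real.sqrt ((lam - 1) * (1 - x) / (2 * lam)) ≠ 1 := ne_of_lt hs_lt
  have hs_nem1 : Real.sqrt ((lam - 1) * (1 - x) / (2 * lam)) ≠ -1 := by
    have := Real.sqrt_nonneg ((lam - 1) * (1 - x) / (2 * lam)); linarith
  have hA := (Real.hasDerivAt_arcsin hs_nem1 hs_ne1).comp x hS
  have hU : HasDerivAt (fun z : ℝ => Real.sqrt (1 - z)) (1 / (2 * Real.sqrt (1 - x)) * (-1)) x :=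
    (Real.hasDerivAt_sqrt h1x.ne').comp x hsub
  have hGlin : HasDerivAt (fun z : ℝ => 1 + lam + (lam - 1) * z) (lam - 1) x := by
    simpa using ((hasDerivAt_id x).const_mul (lam - 1)).const_add (1 + lam)
  have hV : HasDerivAt (fun z : ℝ => Real.sqrt (1 + lam + (lam - 1) * z))
      (1 / (2 * Real.sqrt (1 + lam + (lam - 1) * x)) * (lam - 1)) x :=
    (Real.hasDerivAt_sqrt hg.ne').comp x hGlin
  have hF := (hA.const_mul (2 / (lam - 1) ^ ((3:ℝ)/2))).sub ((hU.mul hV).div_const (lam - 1))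
  refine (hF.congr_deriv ?_ : HasDerivAt (Fant lam) _ x)
  symm
  -- now an equality of reals
  set u := Real.sqrt (1 - x) with hu
  set v := Real.sqrt (1 + lam + (lam - 1) * x) with hv
  set w := Real.sqrt (lam - 1) with hw
  set t := Real.sqrt (2 * lam) with ht
  have hu2 : u ^ 2 = 1 - x := Real.sq_sqrt h1x.le
  have hv2 : v ^ 2 = 1 + lam + (lam - 1) * x := Real.sq_sqrt hg.le
  have hw2 : w ^ 2 = lam - 1 := Real.sq_sqrt ha.le
  have ht2 : t ^ 2 = 2 * lam := Real.sq_sqrt hl.le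
  have hupos : 0 < u := Real.sqrt_pos.mpr h1x
  have hvpos : 0 < v := Real.sqrt_pos.mpr hg
  have hwpos : 0 < w := Real.sqrt_pos.mpr ha
  have htpos : 0 < t := Real.sqrt_pos.mpr hl
  have hs_eq : Real.sqrt ((lam - 1) * (1 - x) / (2 * lam)) = w * u / t := by
    rw [Real.sqrt_div (by positivity), Real.sqrt_mul ha.le]
  have h1s : Real.sqrt (1 - ((lam - 1) * (1 - x) / (2 * lam))) = v / t := by
    rw [show 1 - (lam - 1) * (1 - x) / (2 * lam) = (1 + lam + (lam - 1) * x) / (2 * lam) by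
      field_simp; ring]
    rw [Real.sqrt_div hg.le]
  have hsq : Real.sqrt ((lam - 1) * (1 - x) / (2 * lam)) ^ 2 = (lam - 1) * (1 - x) / (2 * lam) :=
    Real.sq_sqrt hinner_pos.le
  have h32 : (lam - 1) ^ ((3:ℝ)/2) = (lam - 1) * w := by
    rw [show (3:ℝ)/2 = 1 + 1/2 by norm_num, Real.rpow_add ha, Real.rpow_one,
      ← Real.sqrt_eq_rpow]
  rw [hsq, h1s, hs_eq, h32,
    show 1 - x + lam * (1 + x) = 1 + lam + (lam - 1) * x by ring, ← hv]
  have hlam0 : lam ≠ 0 := by linarith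
  field_simp
  linear_combination (lam - 1) * ht2 - lam * w ^ 2 * hv2 + lam * w ^ 2 * (lam - 1) * hu2 - 2 * lam * hw2


theorem stmt_10 (lam : ℝ) (hlam : 1 < lam) :
    (lam / (1 + lam) ^ ((3:ℝ)/2)) *
        ∫ z in (0:ℝ)..1, z / (Real.sqrt (1 - z) * Real.sqrt (1 - z + lam * (1 + z))) =
      (lam / (lam ^ 2 - 1) ^ ((3:ℝ)/2)) *
        (Real.sqrt (lam ^ 2 - 1) - Real.arccos (1 / lam)) := by
  have ha : (0:ℝ) < lam - 1 := by linarith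
  have hl : (0:ℝ) < lam := by linarith
  have h1l : (0:ℝ) < 1 + lam := by linarith
  set f : ℝ → ℝ := fun z => z / (Real.sqrt (1 - z) * Real.sqrt (1 - z + lam * (1 + z))) with hf
  -- integrability
  have base : IntervalIntegrable (fun x : ℝ => x ^ (-(1/2) : ℝ)) volume 0 1 :=
    intervalIntegral.intervalIntegrable_rpow' (by norm_num)
  have comp : IntervalIntegrable (fun z : ℝ => (1 - z) ^ (-(1/2) : ℝ)) volume 0 1 := by
    have h := (base.comp_sub_left 1).symm
    simpa using h
  have hcg : ContinuousOn (fun z : ℝ => z / Real.sqrt (1 - z + lam * (1 + z)))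
      (Set.uIcc (0:ℝ) 1) := by
    apply ContinuousOn.div continuousOn_id
      ((Real.continuous_sqrt.comp (by continuity)).continuousOn)
    intro z hz
    rw [Set.uIcc_of_le (by norm_num)] at hz
    have : 0 < 1 - z + lam * (1 + z) := by nlinarith [hz.1, hz.2]
    exact (Real.sqrt_pos.mpr this).ne'
  have hprod := comp.mul_continuousOn hcg
  have hint : IntervalIntegrable f volume 0 1 := by
    rw [intervalIntegrable_iff_integrableOn_Ioc_of_le (by norm_num)] at hprod ⊢
    refine hprod.congr_fun ?_ measurableSet_Ioc
    intro z hz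
    have hz1 : z ≤ 1 := hz.2
    have h1z : (0:ℝ) ≤ 1 - z := by linarith
    simp only [hf]
    rw [Real.rpow_neg h1z, ← Real.sqrt_eq_rpow]
    ring
  -- continuity of antiderivative
  have hcont : ContinuousOn (Fant lam) (Set.Icc 0 1) := by
    apply Continuous.continuousOn
    unfold Fant
    continuity
  have hderiv : ∀ x ∈ Set.Ioo (0:ℝ) 1, HasDerivWithinAt (Fant lam) (f x) (Set.Ioi x) x :=
    fun x hx => (Fant_hasDerivAt lam x hlam hx.1 hx.2).hasDerivWithinAt
  have hIeq : ∫ z in (0:ℝ)..1, f z = Fant lam 1 - Fant lam 0 :=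
    intervalIntegral.integral_eq_sub_of_hasDeriv_right_of_le (by norm_num) hcont hderiv hint
  have hF1 : Fant lam 1 = 0 := by norm_num [Fant]
  have hF0 : Fant lam 0 = 2 / (lam - 1) ^ ((3:ℝ)/2) * arcsin (Real.sqrt ((lam - 1) / (2 * lam)))
      - Real.sqrt (1 + lam) / (lam - 1) := by
    norm_num [Fant]
  -- the arccos identity
  have hinn : (0:ℝ) ≤ (lam - 1) / (2 * lam) := by positivity
  have hs2 : Real.sqrt ((lam - 1) / (2 * lam)) ^ 2 = (lam - 1) / (2 * lam) := Real.sq_sqrt hinn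
  have hsle : Real.sqrt ((lam - 1) / (2 * lam)) ≤ 1 := by
    have hle : (lam - 1) / (2 * lam) ≤ 1 := by
      rw [div_le_one (by positivity)]; linarith
    have h := Real.sqrt_le_sqrt hle
    simpa using h
  have hsnn : 0 ≤ Real.sqrt ((lam - 1) / (2 * lam)) := Real.sqrt_nonneg _
  set θ := arcsin (Real.sqrt ((lam - 1) / (2 * lam))) with hθ
  have hθ0 : 0 ≤ θ := Real.arcsin_nonneg.mpr hsnn
  have hθle : θ ≤ π / 2 := Real.arcsin_le_pi_div_two _
  have hcos : Real.cos (2 * θ) = 1 / lam := by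
    rw [Real.cos_two_mul]
    have hsin : Real.sin θ = Real.sqrt ((lam - 1) / (2 * lam)) :=
      Real.sin_arcsin (by linarith) hsle
    have hcossq : Real.cos θ ^ 2 = 1 - Real.sin θ ^ 2 := by
      have := Real.sin_sq_add_cos_sq θ; linarith
    rw [hcossq, hsin, hs2, eq_div_iff hl.ne']
    field_simp
    ring
  have harccos : Real.arccos (1 / lam) = 2 * θ := by
    rw [← hcos, Real.arccos_cos (by linarith) (by linarith)]
  -- final algebra
  have h32a : (lam - 1) ^ ((3:ℝ)/2) = (lam - 1) * Real.sqrt (lam - 1) := by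
    rw [show (3:ℝ)/2 = 1 + 1/2 by norm_num, Real.rpow_add ha, Real.rpow_one,
      ← Real.sqrt_eq_rpow]
  have h32b : (1 + lam) ^ ((3:ℝ)/2) = (1 + lam) * Real.sqrt (1 + lam) := by
    rw [show (3:ℝ)/2 = 1 + 1/2 by norm_num, Real.rpow_add h1l, Real.rpow_one,
      ← Real.sqrt_eq_rpow]
  have h32c : (lam ^ 2 - 1) ^ ((3:ℝ)/2)
      = ((lam - 1) * Real.sqrt (lam - 1)) * ((1 + lam) * Real.sqrt (1 + lam)) := by
    rw [show lam ^ 2 - 1 = (lam - 1) * (1 + lam) by ring, Real.mul_rpow ha.le h1l.le,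
      h32a, h32b]
  have hsqrtm : Real.sqrt (lam ^ 2 - 1) = Real.sqrt (lam - 1) * Real.sqrt (1 + lam) := by
    rw [show lam ^ 2 - 1 = (lam - 1) * (1 + lam) by ring, Real.sqrt_mul ha.le]
  rw [hIeq, hF1, hF0, harccos, h32a, h32b, h32c, hsqrtm]
  have hppos : 0 < Real.sqrt (lam - 1) := Real.sqrt_pos.mpr ha
  have hqpos : 0 < Real.sqrt (1 + lam) := Real.sqrt_pos.mpr h1l
  field_simp
  ring
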